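/- Let p ≥ 5 be prime and let a, h be integers with 1 ≤ a < p. If h² + 12pa − 36a² − p² ≡ 0 (mod 24p), then there exists an integer k with gcd(k,6) = 1 such that h = 6a + pk or h = −6a + pk. -/

import Mathlib

open Complex Finset

noncomputable def e (x : ℝ) : ℂ := Complex.exp (2 * Real.pi * Complex.I * x)

def kron12 (k : ℤ) : ℤ :=
  if k % 12 = 1 ∨ k % 12 = 11 then 1
  else if k % 12 = 5 ∨ k % 12 = 7 then -1 else 0

lemma aux_gcd6 (a k q : ℤ) (hq2 : q % 2 = 1) (hq3 : ¬ (3:ℤ) ∣ q)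
    (hdvd : (24:ℤ) ∣ 12*a*(k+1) + q*(k^2-1)) : Int.gcd k 6 = 1 := by
  have h2 : ¬ (2:ℤ) ∣ k := by
    rintro ⟨t, rfl⟩
    have h8 : (8:ℤ) ∣ 12*a*(2*t+1) + q*((2*t)^2-1) :=
      dvd_trans (by norm_num) hdvd
    obtain ⟨c, hc⟩ := h8
    have hc' : 24*(a*t) + 12*a + 4*(q*(t*t)) - q = 8*c := by linear_combination hc
    set v := a*t; set w := q*(t*t)
    omega
  have h3 : ¬ (3:ℤ) ∣ k := by
    rintro ⟨t, rfl⟩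
    have h3' : (3:ℤ) ∣ 12*a*(3*t+1) + q*((3*t)^2-1) :=
      dvd_trans (by norm_num) hdvd
    obtain ⟨c, hc⟩ := h3'
    have hc' : 36*(a*t) + 12*a + 9*(q*(t*t)) - q = 3*c := by linear_combination hc
    set v := a*t; set w := q*(t*t)
    omega
  have c2 : IsCoprime k 2 := ((Int.prime_two.coprime_iff_not_dvd).mpr h2).symm
  have c3 : IsCoprime k 3 := ((Int.prime_three.coprime_iff_not_dvd).mpr h3).symm
  have c6 : IsCoprime k 6 := by
    have := c2.mul_right c3
    norm_num at this
    exact this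
  exact Int.isCoprime_iff_gcd_eq_one.mp c6

theorem stmt_4 (p : ℕ) (hp : p.Prime) (hp5 : 5 ≤ p) (a h : ℤ)
    (ha : 1 ≤ a ∧ a < p)
    (hcong : (24 * (p : ℤ)) ∣ (h ^ 2 + 12 * p * a - 36 * a ^ 2 - (p : ℤ) ^ 2)) :
    ∃ k : ℤ, Int.gcd k 6 = 1 ∧ (h = 6 * a + p * k ∨ h = -6 * a + p * k) := by
  have hpp : Prime (p:ℤ) := Nat.prime_iff_prime_int.mp hp
  have hp0 : (p:ℤ) ≠ 0 := by positivity
  have hq2 : (p:ℤ) % 2 = 1 := by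
    have := hp.odd_of_ne_two (by omega)
    obtain ⟨m, hm⟩ := this
    omega
  have hq3 : ¬ (3:ℤ) ∣ (p:ℤ) := by
    intro hd
    have hd' : (3:ℕ) ∣ p := by exact_mod_cast hd
    rcases (hp.eq_one_or_self_of_dvd 3 hd') with h1 | h1 <;> omega
  have h1 : (p:ℤ) ∣ (h - 6*a) * (h + 6*a) := by
    have hpX : (p:ℤ) ∣ h^2+12*p*a-36*a^2-(p:ℤ)^2 := dvd_trans (dvd_mul_left _ 24) hcong
    have := hpX.sub (dvd_mul_right (p:ℤ) (12*a - p))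
    rw [show (h - 6*a) * (h + 6*a) = h^2+12*p*a-36*a^2-(p:ℤ)^2 - p*(12*a-p) by ring]; exact this
  rcases hpp.dvd_mul.mp h1 with hd | hd
  · obtain ⟨k, hk⟩ := hd
    have hh : h = 6*a + p*k := by linarith
    refine ⟨k, ?_, Or.inl hh⟩
    apply aux_gcd6 a k (p:ℤ) hq2 hq3
    have : (p:ℤ) * (24 : ℤ) ∣ (p:ℤ) * (12*a*(k+1) + p*(k^2-1)) := by
      rw [mul_comm (p:ℤ) 24]
      convert hcong using 1
      rw [hh]; ring
    exact (mul_dvd_mul_iff_left hp0).mp this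
  · obtain ⟨k, hk⟩ := hd
    have hh : h = -6*a + p*k := by linarith
    refine ⟨k, ?_, Or.inr hh⟩
    have := aux_gcd6 a (-k) (p:ℤ) hq2 hq3 ?_
    · rwa [Int.neg_gcd] at this
    · have : (p:ℤ) * (24 : ℤ) ∣ (p:ℤ) * (12*a*((-k)+1) + p*((-k)^2-1)) := by
        rw [mul_comm (p:ℤ) 24]
        convert hcong using 1
        rw [hh]; ring
      exact (mul_dvd_mul_iff_left hp0).mp this
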